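/- Let K ⊆ R^d be a finite set (in [−∞,∞)-free reals), x ∈ R^d, and g : K → R. Define F(x) = inf { y ∈ R : ∃ H ∈ R^d with y + H·(s − x) ≥ g(s) for all s ∈ K }. Then F is upper semicontinuous on R^d (with values in R ∪ {−∞, +∞}): for every x and every sequence x_k → x, limsup_k F(x_k) ≤ F(x). -/

import Mathlib

open Filter

/-- The one-step superhedging price over a finite scenario set `K` with payoff
`g`, as an extended real number (`sInf ∅ = ⊤`, unbounded below gives `⊥`). -/
noncomputable def superhedgePrice3 (d : ℕ) (K : Finset (Fin d → ℝ))
    (g : (Fin d → ℝ) → ℝ) (x : Fin d → ℝ) : EReal :=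
  sInf ((fun y : ℝ => (y : EReal)) ''
    {y : ℝ | ∃ H : Fin d → ℝ, ∀ s ∈ K, g s ≤ y + ∑ i, H i * (s i - x i)})

/-- the superhedging price function is upper semicontinuous
along sequences: `limsup_k F(x_k) ≤ F(x)` whenever `x_k → x`. -/
theorem superhedgePrice_upper_semicontinuous
    (d : ℕ) (K : Finset (Fin d → ℝ)) (g : (Fin d → ℝ) → ℝ)
    (x : Fin d → ℝ) (xk : ℕ → Fin d → ℝ)
    (hxk : Tendsto xk atTop (nhds x)) :
    limsup (fun k => superhedgePrice3 d K g (xk k)) atTop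
      ≤ superhedgePrice3 d K g x := by
  apply le_sInf
  rintro _ ⟨y, ⟨H, hyH⟩, rfl⟩
  set c : ℕ → ℝ := fun k => y + ∑ i, H i * (xk k i - x i) with hc
  have hck : ∀ k, superhedgePrice3 d K g (xk k) ≤ (c k : EReal) := by
    intro k
    apply sInf_le
    refine ⟨c k, ⟨H, fun s hs => ?_⟩, rfl⟩
    have : c k + ∑ i, H i * (s i - xk k i) = y + ∑ i, H i * (s i - x i) := by
      simp only [hc]
      rw [add_assoc, ← Finset.sum_add_distrib]
      congr 1
      apply Finset.sum_congr rfl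
      intro i _
      ring
    rw [this]
    exact hyH s hs
  have hclim : Tendsto c atTop (nhds y) := by
    have hsum : Tendsto (fun k => ∑ i, H i * (xk k i - x i)) atTop (nhds 0) := by
      have : Tendsto (fun z : Fin d → ℝ => ∑ i, H i * (z i - x i)) (nhds x)
          (nhds (∑ i, H i * (x i - x i))) := by
        apply tendsto_finset_sum
        intro i _
        exact (tendsto_const_nhds.mul ((continuous_apply i).tendsto x |>.sub
          tendsto_const_nhds))
      simpa [Function.comp_def] using this.comp hxk
    simpa using (tendsto_const_nhds.add hsum : Tendsto c atTop (nhds (y + 0)))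
  have hclimE : Tendsto (fun k => (c k : EReal)) atTop (nhds (y : EReal)) :=
    (continuous_coe_real_ereal.tendsto y).comp hclim
  calc limsup (fun k => superhedgePrice3 d K g (xk k)) atTop
      ≤ limsup (fun k => (c k : EReal)) atTop :=
        limsup_le_limsup (Eventually.of_forall hck)
    _ = (y : EReal) := hclimE.limsup_eq
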